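/- Let K ⊆ V be a nonempty cone, let J ∈ F̂(K), and let F be an extreme ray of J, i.e., a face of J whose linear span is a one-dimensional subspace of V. Then F ⊆ K. -/
import Mathlib


open RealInnerProductSpace

variable {V : Type*} [NormedAddCommGroup V] [InnerProductSpace ℝ V]

/-- A (not necessarily convex or closed) cone: closed under nonnegative scaling. -/
def IsCone (C : Set V) : Prop := ∀ X ∈ C, ∀ l : ℝ, 0 ≤ l → l • X ∈ C

/-- `F̂(K)`: the family of all convex cones `J ⊆ co K` with `co (K ∩ J) = J`. -/
def Fhat (K : Set V) : Set (Set V) :=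
  {J | Convex ℝ J ∧ IsCone J ∧ J ⊆ convexHull ℝ K ∧ convexHull ℝ (K ∩ J) = J}

/-- `F` is a face of the convex cone `C`: `F` is a convex cone contained in `C`, and
whenever a finite sum of elements of `C` lies in `F`, each summand lies in `F`. -/
def IsFace (C F : Set V) : Prop :=
  F ⊆ C ∧ Convex ℝ F ∧ IsCone F ∧
    ∀ (m : ℕ) (X : Fin m → V), (∀ k, X k ∈ C) → (∑ k, X k) ∈ F → ∀ k, X k ∈ F

/-- Theorem 3.1 (iii): every extreme ray `F` of `J ∈ F̂(K)` (a face of `J` spanning a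
one-dimensional linear subspace) is contained in `K`. -/
theorem stmt_10 [FiniteDimensional ℝ V] (K J F : Set V)
    (hKne : K.Nonempty) (hKcone : IsCone K)
    (hJ : J ∈ Fhat K) (hF : IsFace J F)
    (hray : Module.finrank ℝ (Submodule.span ℝ F) = 1) :
    F ⊆ K := by
  obtain ⟨hJconv, hJcone, hJsub, hJhull⟩ := hJ
  obtain ⟨hFJ, hFconv, hFcone, hface⟩ := hF
  intro x hxF
  by_cases hx0 : x = 0
  · obtain ⟨y, hy⟩ := hKne
    have := hKcone y hy 0 le_rfl
    simpa [hx0] using this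
  -- x ∈ J = convexHull (K ∩ J)
  have hxJ : x ∈ convexHull ℝ (K ∩ J) := by rw [hJhull]; exact hFJ hxF
  rw [mem_convexHull_iff_exists_fintype] at hxJ
  obtain ⟨ι, _, w, z, hw₀, hw₁, hz, hx⟩ := hxJ
  -- reindex by Fin m
  let e := Fintype.equivFin ι
  set m := Fintype.card ι
  set X : Fin m → V := fun k => w (e.symm k) • z (e.symm k) with hX
  have hsum : (∑ k, X k) = x := by
    rw [← hx]
    exact Fintype.sum_equiv e.symm _ _ (fun k => rfl)
  have hXJ : ∀ k, X k ∈ J := fun k =>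
    hJcone _ (hz (e.symm k)).2 _ (hw₀ (e.symm k))
  have hXF : ∀ k, X k ∈ F := hface m X hXJ (hsum ▸ hxF)
  -- each X k = t k • x, using finrank span F = 1
  set S := Submodule.span ℝ F with hS
  have hxS : x ∈ S := Submodule.subset_span hxF
  have hxS0 : (⟨x, hxS⟩ : S) ≠ 0 := by
    intro h; exact hx0 (congrArg Subtype.val h)
  have hspan : Submodule.span ℝ {(⟨x, hxS⟩ : S)} = ⊤ :=
    (finrank_eq_one_iff_of_nonzero _ hxS0).mp hray
  have hcoef : ∀ k, ∃ t : ℝ, X k = t • x := by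
    intro k
    have hXS : X k ∈ S := Submodule.subset_span (hXF k)
    have : (⟨X k, hXS⟩ : S) ∈ Submodule.span ℝ {(⟨x, hxS⟩ : S)} := by
      rw [hspan]; trivial
    obtain ⟨t, ht⟩ := Submodule.mem_span_singleton.mp this
    exact ⟨t, (congrArg Subtype.val ht).symm⟩
  choose t ht using hcoef
  have hsum' : (∑ k, t k) = 1 := by
    have h1 : (∑ k, X k) = ∑ k, t k • x := Finset.sum_congr rfl fun k _ => ht k
    have : (∑ k, t k) • x = (1 : ℝ) • x := by
      rw [Finset.sum_smul, one_smul, ← h1, hsum]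
    have := sub_eq_zero.mpr this
    rw [← sub_smul] at this
    rcases smul_eq_zero.mp this with h | h
    · linarith [sub_eq_zero.mp h]
    · exact absurd h hx0
  -- some t k > 0
  have hexists : ∃ k, (0 : ℝ) < t k := by
    by_contra h
    push_neg at h
    have : (∑ k, t k) ≤ 0 := Finset.sum_nonpos fun k _ => h k
    linarith
  obtain ⟨k, hk⟩ := hexists
  -- then x = ((t k)⁻¹ * w (e.symm k)) • z (e.symm k) ∈ K
  have hxk : x = ((t k)⁻¹ * w (e.symm k)) • z (e.symm k) := by
    have h2 : x = (t k)⁻¹ • X k := by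
      rw [ht k, smul_smul, inv_mul_cancel₀ hk.ne', one_smul]
    rw [h2]; simp only [hX, smul_smul]
  rw [hxk]
  exact hKcone _ (hz (e.symm k)).1 _ (mul_nonneg (inv_nonneg.mpr hk.le) (hw₀ _))
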